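/- Let t₀ ≥ 1 and t₁ ≥ 1 be natural numbers and T = t₀ + t₁. For any natural number k with 1 ≤ k, the number of sequences s : Fin T → Bool having exactly t₀ entries equal to false and t₁ entries equal to true and whose number of runs U(s) equals 2k + 1 is C(t₀ − 1, k)·C(t₁ − 1, k − 1) + C(t₀ − 1, k − 1)·C(t₁ − 1, k), where C(n, r) denotes the binomial coefficient. -/

import Mathlib

open Finset

/-- The number of runs of a finite boolean sequence `s : Fin T → Bool`:
one plus the number of adjacent positions at which the value changes. -/
def numRuns {T : ℕ} (s : Fin T → Bool) : ℕ :=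
  1 + (Finset.univ.filter
        (fun p : Fin T × Fin T => (p.1 : ℕ) + 1 = (p.2 : ℕ) ∧ s p.1 ≠ s p.2)).card

lemma numRuns_eq {n : ℕ} (s : Fin (n+1) → Bool) :
    numRuns s = 1 + (univ.filter (fun i : Fin n => s i.castSucc ≠ s i.succ)).card := by
  unfold numRuns
  congr 1
  symm
  apply Finset.card_bij (fun (i : Fin n) _ => (i.castSucc, i.succ))
  · intro i hi
    simp only [mem_filter, mem_univ, true_and] at hi ⊢
    exact ⟨by simp, hi⟩
  · intro a _ b _ h
    have : a.castSucc = b.castSucc := congrArg Prod.fst h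
    exact Fin.castSucc_injective _ this
  · intro p hp
    simp only [mem_filter, mem_univ, true_and] at hp
    obtain ⟨h1, h2⟩ := hp
    have hlt : (p.1 : ℕ) < n := by
      have := p.2.isLt; omega
    refine ⟨⟨(p.1 : ℕ), hlt⟩, ?_, ?_⟩
    · simp only [mem_filter, mem_univ, true_and]
      have e1 : (⟨(p.1 : ℕ), hlt⟩ : Fin n).castSucc = p.1 := by
        ext; simp
      have e2 : (⟨(p.1 : ℕ), hlt⟩ : Fin n).succ = p.2 := by
        ext; simp [h1]
      rw [e1, e2]; exact h2
    · ext <;> simp [h1]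

def cnt {n : ℕ} (b : Bool) (s : Fin n → Bool) : ℕ := (univ.filter (fun i => s i = b)).card

lemma cnt_snoc {n : ℕ} (b c : Bool) (s : Fin n → Bool) :
    cnt b (Fin.snoc s c) = cnt b s + if c = b then 1 else 0 := by
  unfold cnt
  rw [Finset.card_filter, Finset.card_filter, Fin.sum_univ_castSucc]
  simp [Fin.snoc_castSucc, Fin.snoc_last]

lemma chg_snoc {n : ℕ} (c : Bool) (s : Fin (n+1) → Bool) :
    (univ.filter (fun i : Fin (n+1) =>
        (Fin.snoc s c : Fin (n+2) → Bool) i.castSucc ≠ (Fin.snoc s c : Fin (n+2) → Bool) i.succ)).card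
    = (univ.filter (fun i : Fin n => s i.castSucc ≠ s i.succ)).card
      + if s (Fin.last n) = c then 0 else 1 := by
  rw [Finset.card_filter, Finset.card_filter, Fin.sum_univ_castSucc]
  simp only [Fin.succ_castSucc]
  simp [Fin.snoc_castSucc, Fin.snoc_last, Fin.succ_last, -Fin.castSucc_succ]

lemma card_split_snoc {n : ℕ} (P : (Fin (n+1) → Bool) → Prop) [DecidablePred P] :
    (univ.filter P).card
      = (univ.filter (fun t : Fin n → Bool => P (Fin.snoc t false))).card
        + (univ.filter (fun t : Fin n → Bool => P (Fin.snoc t true))).card := by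
  classical
  let e : ((Fin n → Bool) × Bool) ≃ (Fin (n+1) → Bool) :=
    { toFun := fun p => Fin.snoc p.1 p.2
      invFun := fun s => (Fin.init s, s (Fin.last n))
      left_inv := by intro p; simp [Fin.init_snoc, Fin.snoc_last]
      right_inv := by intro s; simp [Fin.snoc_init_self] }
  rw [Finset.card_filter, Finset.card_filter, Finset.card_filter]
  rw [← Fintype.sum_equiv e (fun p => if P (Fin.snoc p.1 p.2) then 1 else 0)
        (fun s => if P s then 1 else 0) (by intro p; simp only [e, Equiv.coe_fn_mk])]
  rw [Fintype.sum_prod_type, Finset.sum_comm, Fintype.sum_bool]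
  simp [add_comm]

lemma numRuns_snoc {n : ℕ} (c : Bool) (s : Fin (n+1) → Bool) :
    numRuns (Fin.snoc s c : Fin (n+2) → Bool)
      = numRuns s + if s (Fin.last n) = c then 0 else 1 := by
  rw [numRuns_eq, numRuns_eq, chg_snoc]
  omega

def N (n t₀ u : ℕ) (b : Bool) : ℕ :=
  (univ.filter (fun s : Fin (n+1) → Bool =>
     cnt false s = t₀ ∧ numRuns s = u ∧ s (Fin.last n) = b)).card

lemma N_zero_runs (n t₀ : ℕ) (b : Bool) : N n t₀ 0 b = 0 := by
  unfold N
  convert Finset.card_empty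
  rw [Finset.eq_empty_iff_forall_notMem]
  intro s hs
  simp only [mem_filter] at hs
  have := hs.2.2.1
  rw [numRuns_eq] at this
  omega

lemma N_big (n t₀ u : ℕ) (b : Bool) (h : n + 1 < t₀) : N n t₀ u b = 0 := by
  unfold N
  convert Finset.card_empty
  rw [Finset.eq_empty_iff_forall_notMem]
  intro s hs
  simp only [mem_filter] at hs
  have h1 : cnt false s ≤ n + 1 := by
    have := Finset.card_filter_le (univ : Finset (Fin (n+1))) (fun i => s i = false)
    simpa [cnt] using this
  omega

-- split a filter card over the value of t (last n)

lemma split_last {n : ℕ} (Q : (Fin (n+1) → Bool) → Prop) [DecidablePred Q] :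
    (univ.filter Q).card
      = (univ.filter (fun t => Q t ∧ t (Fin.last n) = false)).card
        + (univ.filter (fun t => Q t ∧ t (Fin.last n) = true)).card := by
  classical
  rw [← Finset.filter_filter, ← Finset.filter_filter]
  rw [← Finset.card_filter_add_card_filter_not
    (s := univ.filter Q) (p := fun t => t (Fin.last n) = false)]
  congr 1
  apply congrArg Finset.card
  apply Finset.filter_congr
  intro t _
  simp

lemma N_succ_false (n m v : ℕ) :
    N (n+1) (m+1) (v+1) false = N n m (v+1) false + N n m v true := by
  unfold N
  rw [card_split_snoc]
  have h2 : (univ.filter (fun t : Fin (n+1) → Bool =>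
      cnt false (Fin.snoc t true : Fin (n+2) → Bool) = m+1 ∧
      numRuns (Fin.snoc t true : Fin (n+2) → Bool) = v+1 ∧
      (Fin.snoc t true : Fin (n+2) → Bool) (Fin.last (n+1)) = false)).card = 0 := by
    convert Finset.card_empty
    rw [Finset.eq_empty_iff_forall_notMem]
    intro t ht
    simp only [mem_filter, Fin.snoc_last] at ht
    exact absurd ht.2.2.2 (by simp)
  rw [h2, add_zero]
  rw [split_last (fun t : Fin (n+1) → Bool =>
      cnt false (Fin.snoc t false : Fin (n+2) → Bool) = m+1 ∧
      numRuns (Fin.snoc t false : Fin (n+2) → Bool) = v+1 ∧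
      (Fin.snoc t false : Fin (n+2) → Bool) (Fin.last (n+1)) = false)]
  congr 1
  · apply congrArg Finset.card
    apply Finset.filter_congr
    intro t _
    simp only [cnt_snoc, numRuns_snoc, Fin.snoc_last]
    constructor
    · rintro ⟨⟨h1, h2, _⟩, h3⟩
      rw [h3] at h2
      simp at h1 h2
      exact ⟨h1, h2, h3⟩
    · rintro ⟨h1, h2, h3⟩
      rw [h3]
      refine ⟨⟨by simp [h1], by simp [h2], trivial⟩, rfl⟩
  · apply congrArg Finset.card
    apply Finset.filter_congr
    intro t _
    simp only [cnt_snoc, numRuns_snoc, Fin.snoc_last]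
    constructor
    · rintro ⟨⟨h1, h2, _⟩, h3⟩
      rw [h3] at h2
      simp at h1 h2
      exact ⟨h1, by omega, h3⟩
    · rintro ⟨h1, h2, h3⟩
      rw [h3]
      refine ⟨⟨by simp [h1], by simp; omega, trivial⟩, rfl⟩

lemma N_succ_true (n t₀ v : ℕ) :
    N (n+1) t₀ (v+1) true = N n t₀ (v+1) true + N n t₀ v false := by
  unfold N
  rw [card_split_snoc]
  have h2 : (univ.filter (fun t : Fin (n+1) → Bool =>
      cnt false (Fin.snoc t false : Fin (n+2) → Bool) = t₀ ∧
      numRuns (Fin.snoc t false : Fin (n+2) → Bool) = v+1 ∧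
      (Fin.snoc t false : Fin (n+2) → Bool) (Fin.last (n+1)) = true)).card = 0 := by
    convert Finset.card_empty
    rw [Finset.eq_empty_iff_forall_notMem]
    intro t ht
    simp only [mem_filter, Fin.snoc_last] at ht
    exact absurd ht.2.2.2 (by simp)
  rw [h2, zero_add]
  rw [split_last (fun t : Fin (n+1) → Bool =>
      cnt false (Fin.snoc t true : Fin (n+2) → Bool) = t₀ ∧
      numRuns (Fin.snoc t true : Fin (n+2) → Bool) = v+1 ∧
      (Fin.snoc t true : Fin (n+2) → Bool) (Fin.last (n+1)) = true)]
  rw [add_comm]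
  congr 1
  · apply congrArg Finset.card
    apply Finset.filter_congr
    intro t _
    simp only [cnt_snoc, numRuns_snoc, Fin.snoc_last]
    constructor
    · rintro ⟨⟨h1, h2, _⟩, h3⟩
      rw [h3] at h2
      simp at h1 h2
      exact ⟨h1, h2, h3⟩
    · rintro ⟨h1, h2, h3⟩
      rw [h3]
      refine ⟨⟨by simp [h1], by simp [h2], trivial⟩, rfl⟩
  · apply congrArg Finset.card
    apply Finset.filter_congr
    intro t _
    simp only [cnt_snoc, numRuns_snoc, Fin.snoc_last]
    constructor
    · rintro ⟨⟨h1, h2, _⟩, h3⟩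
      rw [h3] at h2
      simp at h1 h2
      exact ⟨h1, by omega, h3⟩
    · rintro ⟨h1, h2, h3⟩
      rw [h3]
      refine ⟨⟨by simp [h1], by simp; omega, trivial⟩, rfl⟩

def cf (u t₀ t₁ : ℕ) : ℕ :=
  if u = 0 then 0
  else if u = 1 then (if 1 ≤ t₀ ∧ t₁ = 0 then 1 else 0)
  else if ¬(1 ≤ t₀ ∧ 1 ≤ t₁) then 0
  else if u % 2 = 1 then (t₀-1).choose (u/2) * (t₁-1).choose (u/2 - 1)
  else (t₀-1).choose (u/2 - 1) * (t₁-1).choose (u/2 - 1)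

lemma pascal' (a k : ℕ) (ha : 1 ≤ a) (hk : 1 ≤ k) :
    a.choose k = (a-1).choose (k-1) + (a-1).choose k := by
  obtain ⟨a', rfl⟩ : ∃ a', a = a' + 1 := ⟨a - 1, by omega⟩
  obtain ⟨k', rfl⟩ : ∃ k', k = k' + 1 := ⟨k - 1, by omega⟩
  simp [Nat.choose_succ_succ' a' k']

lemma cf_rec (v m p : ℕ) (h : 1 ≤ m + p) :
    cf (v+1) (m+1) p = cf (v+1) m p + cf v p m := by
  rcases Nat.eq_zero_or_pos v with rfl | hv
  · -- u = 1
    simp only [cf]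
    norm_num
    split_ifs <;> omega
  rcases Nat.even_or_odd v with ⟨j, hj⟩ | ⟨j, hj⟩
  · -- v = 2j even ≥ 2, u = 2j+1 odd ≥ 3
    subst hj
    have hjpos : 1 ≤ j := by omega
    have h1 : j + j + 1 ≠ 0 := by omega
    have h2 : j + j + 1 ≠ 1 := by omega
    have h3 : (j + j + 1) % 2 = 1 := by omega
    have h4 : (j + j + 1) / 2 = j := by omega
    have h5 : j + j ≠ 0 := by omega
    have h6 : j + j ≠ 1 := by omega
    have h7 : ¬((j + j) % 2 = 1) := by omega
    have h8 : (j + j) / 2 - 1 = j - 1 := by omega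
    simp only [cf, h1, h2, h3, h4, h5, h6, h7, h8, if_false, if_true]
    rcases Nat.eq_zero_or_pos p with rfl | hp
    · norm_num
    rcases Nat.eq_zero_or_pos m with rfl | hm
    · have : ¬(1 ≤ (0:ℕ)) := by omega
      simp [this, hp, Nat.choose_eq_zero_of_lt (show 0 < j by omega)]
    · rw [if_neg (by omega : ¬¬(1 ≤ m + 1 ∧ 1 ≤ p)),
          if_neg (by omega : ¬¬(1 ≤ m ∧ 1 ≤ p)),
          if_neg (by omega : ¬¬(1 ≤ p ∧ 1 ≤ m))]
      have e1 : m + 1 - 1 = m := by omega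
      rw [e1, pascal' m j hm hjpos]
      ring
  · -- v = 2j+1 odd, u = 2j+2 even
    subst hj
    have h1 : 2*j + 1 + 1 ≠ 0 := by omega
    have h2 : 2*j + 1 + 1 ≠ 1 := by omega
    have h3 : ¬((2*j + 1 + 1) % 2 = 1) := by omega
    have h4 : (2*j + 1 + 1) / 2 - 1 = j := by omega
    simp only [cf, h1, h2, h3, h4, if_false]
    rcases Nat.eq_zero_or_pos p with rfl | hp
    · norm_num
    rcases Nat.eq_zero_or_pos j with rfl | hj
    · -- v = 1
      norm_num
      rcases Nat.eq_zero_or_pos m with rfl | hm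
      · split_ifs <;> omega
      · split_ifs <;> omega
    · -- v = 2j+1 ≥ 3
      have h5 : 2*j + 1 ≠ 0 := by omega
      have h6 : 2*j + 1 ≠ 1 := by omega
      have h7 : (2*j+1) % 2 = 1 := by omega
      have h8 : (2*j+1) / 2 = j := by omega
      have h9 : (2*j+1) / 2 - 1 = j - 1 := by omega
      simp only [h5, h6, h7, h8, h9, if_false, if_true]
      rcases Nat.eq_zero_or_pos m with rfl | hm
      · have : ¬(1 ≤ (0:ℕ)) := by omega
        simp [this, hp, Nat.choose_eq_zero_of_lt (show 0 < j by omega)]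
      · rw [if_neg (by omega : ¬¬(1 ≤ m + 1 ∧ 1 ≤ p)),
            if_neg (by omega : ¬¬(1 ≤ m ∧ 1 ≤ p)),
            if_neg (by omega : ¬¬(1 ≤ p ∧ 1 ≤ m))]
        have e1 : m + 1 - 1 = m := by omega
        rw [e1, pascal' m j hm hj]
        ring

lemma N_base (t₀ u : ℕ) (b : Bool) :
    N 0 t₀ u b = if (cnt false (fun _ : Fin 1 => b) = t₀ ∧ u = 1) then 1 else 0 := by
  unfold N
  rw [card_split_snoc (n := 0)]
  have key : ∀ c : Bool, (univ.filter (fun t : Fin 0 → Bool =>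
      cnt false (Fin.snoc t c : Fin 1 → Bool) = t₀ ∧ numRuns (Fin.snoc t c : Fin 1 → Bool) = u ∧
        (Fin.snoc t c : Fin 1 → Bool) (Fin.last 0) = b)).card
      = if (cnt false (fun _ : Fin 1 => c) = t₀ ∧ u = 1 ∧ c = b) then 1 else 0 := by
    intro c
    rw [Finset.card_filter, Fintype.sum_unique]
    have hsnoc : ∀ t : Fin 0 → Bool, (Fin.snoc t c : Fin (0+1) → Bool) = (fun _ => c) := by
      intro t
      funext i
      have hi : i = Fin.last 0 := Fin.ext (by omega)
      rw [hi, Fin.snoc_last]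
    rw [hsnoc]
    have hruns : numRuns (fun _ : Fin 1 => c) = 1 := by
      rw [numRuns_eq]
      simp
    simp [hruns, eq_comm]
  rw [key, key]
  cases b <;> simp

lemma cnt_const_false_1 : cnt false (fun _ : Fin 1 => false) = 1 := by simp [cnt]

lemma cnt_const_true_1 : cnt false (fun _ : Fin 1 => true) = 0 := by simp [cnt]

lemma N_closed : ∀ n t₀ u, t₀ ≤ n+1 →
    N n t₀ u false = cf u t₀ (n+1-t₀) ∧ N n t₀ u true = cf u (n+1-t₀) t₀ := by
  intro n
  induction n with
  | zero =>
    intro t₀ u ht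
    rw [N_base, N_base, cnt_const_false_1, cnt_const_true_1]
    constructor
    · interval_cases t₀ <;> simp [cf] <;> omega
    · interval_cases t₀ <;> simp [cf] <;> omega
  | succ n ih =>
    intro t₀ u ht
    rcases Nat.eq_zero_or_pos u with rfl | hu
    · rw [N_zero_runs, N_zero_runs]
      simp [cf]
    obtain ⟨v, rfl⟩ : ∃ v, u = v + 1 := ⟨u - 1, by omega⟩
    constructor
    · rcases Nat.eq_zero_or_pos t₀ with rfl | ht0
      · -- N _ 0 _ false = 0, cf _ 0 _ = 0
        have hN : N (n+1) 0 (v+1) false = 0 := by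
          unfold N
          convert Finset.card_empty
          rw [Finset.eq_empty_iff_forall_notMem]
          intro s hs
          simp only [mem_filter] at hs
          have h1 : Fin.last (n+1) ∈ univ.filter (fun i => s i = false) := by
            simp [hs.2.2.2]
          have h2 : 1 ≤ cnt false s := by
            rw [cnt] at hs ⊢
            exact Finset.card_pos.2 ⟨_, h1⟩
          omega
        rw [hN]
        simp [cf]
      obtain ⟨m, rfl⟩ : ∃ m, t₀ = m + 1 := ⟨t₀ - 1, by omega⟩
      rw [N_succ_false]
      have hm : m ≤ n + 1 := by omega
      rw [(ih m (v+1) hm).1, (ih m v hm).2]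
      have e : n + 2 - (m+1) = n + 1 - m := by omega
      rw [e, cf_rec v m (n+1-m) (by omega)]
    · rcases Nat.lt_or_ge (n+1) t₀ with hbig | hle
      · -- t₀ = n+2
        rw [N_succ_true, N_big n t₀ (v+1) true (by omega), N_big n t₀ v false (by omega)]
        have : n + 2 - t₀ = 0 := by omega
        rw [this]
        simp [cf]
      · rw [N_succ_true, (ih t₀ (v+1) hle).2, (ih t₀ v hle).1]
        have e : n + 2 - t₀ = (n + 1 - t₀) + 1 := by omega
        rw [e, cf_rec v (n+1-t₀) t₀ (by omega)]

/-- **Combinatorial count for the Wald–Wolfowitz runs test (odd case, Section 4.1 of the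
paper).** The number of boolean sequences of length `T = t₀ + t₁` with exactly `t₀` entries
`false` and `t₁` entries `true` having exactly `2k + 1` runs is
`C(t₀−1, k) · C(t₁−1, k−1) + C(t₀−1, k−1) · C(t₁−1, k)`. -/
theorem card_sequences_with_odd_runs (t₀ t₁ : ℕ) (h₀ : 1 ≤ t₀) (h₁ : 1 ≤ t₁)
    (k : ℕ) (hk : 1 ≤ k) :
    (Finset.univ.filter (fun s : Fin (t₀ + t₁) → Bool =>
        (Finset.univ.filter (fun i => s i = false)).card = t₀ ∧
        (Finset.univ.filter (fun i => s i = true)).card = t₁ ∧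
        numRuns s = 2 * k + 1)).card =
      Nat.choose (t₀ - 1) k * Nat.choose (t₁ - 1) (k - 1)
        + Nat.choose (t₀ - 1) (k - 1) * Nat.choose (t₁ - 1) k := by
  obtain ⟨m, rfl⟩ : ∃ m, t₁ = m + 1 := ⟨t₁ - 1, by omega⟩
  -- Step A: drop the cnt-true condition
  have hA : (Finset.univ.filter (fun s : Fin (t₀ + m + 1) → Bool =>
        (Finset.univ.filter (fun i => s i = false)).card = t₀ ∧
        (Finset.univ.filter (fun i => s i = true)).card = m + 1 ∧
        numRuns s = 2 * k + 1)).card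
      = (Finset.univ.filter (fun s : Fin (t₀ + m + 1) → Bool =>
        cnt false s = t₀ ∧ numRuns s = 2 * k + 1)).card := by
    apply congrArg Finset.card
    apply Finset.filter_congr
    intro s _
    have hpart := Finset.card_filter_add_card_filter_not
        (s := (univ : Finset (Fin (t₀ + m + 1)))) (p := fun i => s i = false)
    have hneg : (univ.filter (fun i => ¬ s i = false)) = univ.filter (fun i => s i = true) := by
      apply Finset.filter_congr
      intro i _
      simp
    rw [hneg] at hpart
    simp only [Finset.card_univ, Fintype.card_fin] at hpart
    simp only [cnt]
    constructor
    · rintro ⟨a, _, c⟩; exact ⟨a, c⟩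
    · rintro ⟨a, c⟩; exact ⟨a, by omega, c⟩
  have hB : (Finset.univ.filter (fun s : Fin (t₀ + m + 1) → Bool =>
        cnt false s = t₀ ∧ numRuns s = 2 * k + 1)).card
      = N (t₀ + m) t₀ (2*k+1) false + N (t₀ + m) t₀ (2*k+1) true := by
    rw [split_last]
    unfold N
    congr 1
    · apply congrArg Finset.card
      apply Finset.filter_congr
      intro t _
      constructor
      · rintro ⟨⟨a, b⟩, c⟩; exact ⟨a, b, c⟩
      · rintro ⟨a, b, c⟩; exact ⟨⟨a, b⟩, c⟩
    · apply congrArg Finset.card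
      apply Finset.filter_congr
      intro t _
      constructor
      · rintro ⟨⟨a, b⟩, c⟩; exact ⟨a, b, c⟩
      · rintro ⟨a, b, c⟩; exact ⟨⟨a, b⟩, c⟩
  have ht : t₀ ≤ t₀ + m + 1 := by clear hA hB; omega
  have hC := N_closed (t₀ + m) t₀ (2*k+1) ht
  have e : t₀ + m + 1 - t₀ = m + 1 := by clear hA hB; omega
  rw [e] at hC
  have hcf : ∀ a b : ℕ, 1 ≤ a → 1 ≤ b → cf (2*k+1) a b = (a-1).choose k * (b-1).choose (k-1) := by
    clear hA hB
    intro a b ha hb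
    have h1 : 2*k+1 ≠ 0 := by omega
    have h2 : 2*k+1 ≠ 1 := by omega
    have h3 : (2*k+1) % 2 = 1 := by omega
    have h4 : (2*k+1) / 2 = k := by omega
    simp only [cf, h1, h2, h3, h4, if_false, if_true]
    rw [if_neg (not_not_intro ⟨ha, hb⟩)]
  show (Finset.univ.filter (fun s : Fin (t₀ + m + 1) → Bool =>
        (Finset.univ.filter (fun i => s i = false)).card = t₀ ∧
        (Finset.univ.filter (fun i => s i = true)).card = m + 1 ∧
        numRuns s = 2 * k + 1)).card = _
  rw [hA, hB, hC.1, hC.2, hcf t₀ (m+1) h₀ (Nat.succ_le_succ (Nat.zero_le m)), hcf (m+1) t₀ (Nat.succ_le_succ (Nat.zero_le m)) h₀]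
  ring
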